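/- (Lemma 8.6, dimension-lifting of velocity estimates) Let n ≥ 2 and k ≥ 2 be integers, T ≥ 1 an integer, and Ω > 0, σ > 0, m_min > 0 reals. Let u ∈ ℝ^k and let v_1, v_2 ∈ ℝ^k be unit vectors with 0 ≤ ⟨v_1, v_2⟩ ≤ cos((π/4)·(2/((n+1)(n+2)))^{1/(k−1)}). If for j = 1, 2 one has ‖P_{v_j^⊥}(u)‖₂ < d_{min,k−1}/2 and ‖P_{v_j^⊥}(u)‖₂ ≤ (C(k−1,n)/(TΩ)) · (π/(d_{min,k−1} T Ω))^{2n−2} · σ/m_min, then ‖u‖₂ < d_{min,k}/2 and ‖u‖₂ ≤ (C(k,n)/(TΩ)) · (π/(d_{min,k} T Ω))^{2n−2} · σ/m_min. -/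

import Mathlib

/-- `ξ(k) = Σ_{j=1}^k 1/j`, with `ξ(0) = 0`. -/
noncomputable def xiSum (k : ℕ) : ℝ := Finset.sum (Finset.Icc 1 k) (fun j => (1 : ℝ) / j)

/-- The threshold `d_{min,m}` of Lemma 8.6. -/
noncomputable def dminThreshold (n m T : ℕ) (Ω σ mmin : ℝ) : ℝ :=
  11.76 * Real.pi * Real.exp 1 * (4 : ℝ) ^ (m - 1) *
    (((n : ℝ) + 2) * ((n : ℝ) + 1) / 2) ^ xiSum (m - 1) / ((T : ℝ) * Ω) *
    (σ / mmin) ^ ((1 : ℝ) / (2 * (n : ℝ) - 1))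

/-- The constant `C(m,n)` of Lemma 8.6. -/
noncomputable def Cmn (m n : ℕ) : ℝ :=
  ((4 : ℝ) ^ (m - 1) * (((n : ℝ) + 2) * ((n : ℝ) + 1) / 2) ^ xiSum (m - 1)) ^ (2 * n - 1) *
    (n : ℝ) * 2 ^ (6 * n - 3) * Real.exp 1 ^ (2 * n) * Real.pi ^ (-(1 : ℝ) / 2)


private lemma aux_sq_le_one (cc : ℝ) (h : |cc| ≤ 1 * 1) : 0 ≤ 1 - cc ^ 2 := by
  nlinarith [abs_nonneg cc, sq_abs cc]

private lemma aux_cancel (aa s p : ℝ) (hp : 0 ≤ p) (hs : 0 ≤ s)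
    (h : aa * (1 - cc) ≤ s * p) (hss : s ^ 2 = 1 - cc) : aa * s ≤ p := by
  rcases hs.eq_or_lt with h0 | h0
  · rw [← h0, mul_zero]; exact hp
  · have h' : aa * s ^ 2 ≤ s * p := by rw [hss]; exact h
    nlinarith [h', mul_pos h0 h0]

private lemma aux_sinsq (cc co si : ℝ) (h1 : 0 ≤ cc) (h2 : cc ≤ co)
    (h3 : si ^ 2 + co ^ 2 = 1) : si ^ 2 ≤ 1 - cc ^ 2 := by nlinarith

private lemma aux_ha2 (aa rt q s2 : ℝ) (h : aa ^ 2 ≤ (s2 * rt * q) ^ 2)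
    (hs2 : s2 ^ 2 = 2) : aa ^ 2 ≤ 2 * rt ^ 2 * q ^ 2 := by nlinarith [h, hs2]

private lemma aux_claim1 (nu aa p1 p2 rt dd : ℝ) (hnu : nu ^ 2 = aa ^ 2 + p1 ^ 2)
    (ha2 : aa ^ 2 ≤ 2 * rt ^ 2 * (p1 + p2) ^ 2) (h1 : p1 < dd / 2) (h2 : p2 < dd / 2)
    (hp1 : 0 ≤ p1) (hp2 : 0 ≤ p2) (hd : 0 < dd) (hrt : 1 ≤ rt) (hnu0 : 0 ≤ nu) :
    nu < 4 * rt * dd / 2 := by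
  have hrt2 : 1 ≤ rt ^ 2 := by nlinarith
  have hs1 : (p1 + p2) ^ 2 < dd ^ 2 := by nlinarith [add_nonneg hp1 hp2]
  have hs2 : p1 ^ 2 < dd ^ 2 / 4 := by nlinarith
  have key : 2 * rt ^ 2 * (p1 + p2) ^ 2 < 2 * rt ^ 2 * dd ^ 2 := by
    have h2rt : 0 < 2 * rt ^ 2 := by nlinarith
    exact (mul_lt_mul_iff_right₀ h2rt).2 hs1
  have hsq : nu ^ 2 < (4 * rt * dd / 2) ^ 2 := by
    nlinarith [mul_nonneg (sub_nonneg.2 hrt2) (sq_nonneg dd), pow_pos hd 2]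
  exact lt_of_pow_lt_pow_left₀ 2 (by nlinarith) hsq

private lemma aux_claim2 (nu aa p1 p2 rt BB : ℝ) (hnu : nu ^ 2 = aa ^ 2 + p1 ^ 2)
    (ha2 : aa ^ 2 ≤ 2 * rt ^ 2 * (p1 + p2) ^ 2) (h1 : p1 ≤ BB) (h2 : p2 ≤ BB)
    (hp1 : 0 ≤ p1) (hp2 : 0 ≤ p2) (hrt : 1 ≤ rt) (hnu0 : 0 ≤ nu) :
    nu ≤ 4 * rt * BB := by
  have hB0 : 0 ≤ BB := hp1.trans h1
  have hrt2 : 1 ≤ rt ^ 2 := by nlinarith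
  have hs1 : (p1 + p2) ^ 2 ≤ (2 * BB) ^ 2 := by nlinarith [add_nonneg hp1 hp2]
  have hs2 : p1 ^ 2 ≤ BB ^ 2 := by nlinarith
  have key : 2 * rt ^ 2 * (p1 + p2) ^ 2 ≤ 2 * rt ^ 2 * (2 * BB) ^ 2 := by
    have h2rt : 0 < 2 * rt ^ 2 := by nlinarith
    exact (mul_le_mul_iff_right₀ h2rt).2 hs1
  have hsq : nu ^ 2 ≤ (4 * rt * BB) ^ 2 := by
    nlinarith [mul_nonneg (sub_nonneg.2 hrt2) (sq_nonneg BB), sq_nonneg BB]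
  exact le_of_pow_le_pow_left₀ two_ne_zero (by nlinarith) hsq

/-- Lemma 8.6: dimension-lifting of the velocity estimates. -/
theorem dimension_lifting_velocity_estimates
    (n k T : ℕ) (hn : 2 ≤ n) (hk : 2 ≤ k) (hT : 1 ≤ T)
    (Ω σ mmin : ℝ) (hΩ : 0 < Ω) (hσ : 0 < σ) (hmmin : 0 < mmin)
    (u v₁ v₂ : EuclideanSpace ℝ (Fin k))
    (hv₁ : ‖v₁‖ = 1) (hv₂ : ‖v₂‖ = 1)
    (hip : 0 ≤ (inner ℝ v₁ v₂ : ℝ))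
    (hangle : (inner ℝ v₁ v₂ : ℝ) ≤
      Real.cos (Real.pi / 4 *
        ((2 : ℝ) / (((n : ℝ) + 1) * ((n : ℝ) + 2))) ^ ((1 : ℝ) / ((k : ℝ) - 1))))
    (h1a : ‖(Submodule.orthogonalProjectionOnto (Submodule.span ℝ {v₁})ᗮ u :
        EuclideanSpace ℝ (Fin k))‖ < dminThreshold n (k - 1) T Ω σ mmin / 2)
    (h2a : ‖(Submodule.orthogonalProjectionOnto (Submodule.span ℝ {v₂})ᗮ u :
        EuclideanSpace ℝ (Fin k))‖ < dminThreshold n (k - 1) T Ω σ mmin / 2)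
    (h1b : ‖(Submodule.orthogonalProjectionOnto (Submodule.span ℝ {v₁})ᗮ u :
        EuclideanSpace ℝ (Fin k))‖ ≤
      Cmn (k - 1) n / ((T : ℝ) * Ω) *
        (Real.pi / (dminThreshold n (k - 1) T Ω σ mmin * (T : ℝ) * Ω)) ^ (2 * n - 2) *
        (σ / mmin))
    (h2b : ‖(Submodule.orthogonalProjectionOnto (Submodule.span ℝ {v₂})ᗮ u :
        EuclideanSpace ℝ (Fin k))‖ ≤
      Cmn (k - 1) n / ((T : ℝ) * Ω) *
        (Real.pi / (dminThreshold n (k - 1) T Ω σ mmin * (T : ℝ) * Ω)) ^ (2 * n - 2) *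
        (σ / mmin)) :
    ‖u‖ < dminThreshold n k T Ω σ mmin / 2 ∧
    ‖u‖ ≤ Cmn k n / ((T : ℝ) * Ω) *
        (Real.pi / (dminThreshold n k T Ω σ mmin * (T : ℝ) * Ω)) ^ (2 * n - 2) *
        (σ / mmin) := by
  obtain ⟨j, rfl⟩ : ∃ j, k = j + 2 := ⟨k - 2, by omega⟩
  have hred : j + 2 - 1 = j + 1 := rfl
  simp only [hred] at h1a h2a h1b h2b
  -- notation
  set R : ℝ := ((n : ℝ) + 2) * ((n : ℝ) + 1) / 2 with hRdef
  set t : ℝ := (1 : ℝ) / ((j : ℝ) + 1) with htdef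
  have hn1 : (2:ℝ) ≤ (n:ℝ) := by exact_mod_cast hn
  have hR0 : 0 < R := by rw [hRdef]; nlinarith
  have hR1 : 1 ≤ R := by rw [hRdef]; nlinarith
  have ht0 : 0 ≤ t := by rw [htdef]; positivity
  have hRt0 : 0 < R ^ t := Real.rpow_pos_of_pos hR0 t
  have hRt1 : 1 ≤ R ^ t := Real.one_le_rpow hR1 ht0
  have hT1 : (1:ℝ) ≤ (T:ℝ) := by exact_mod_cast hT
  have hTΩ : 0 < (T:ℝ) * Ω := by positivity
  -- the exponent in hangle
  set x : ℝ := ((2 : ℝ) / (((n : ℝ) + 1) * ((n : ℝ) + 2))) ^ ((1 : ℝ) / (((j + 2 : ℕ) : ℝ) - 1)) with hxdef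
  have hxval : x = (R ^ t)⁻¹ := by
    rw [hxdef]
    have hb : (2 : ℝ) / (((n : ℝ) + 1) * ((n : ℝ) + 2)) = R⁻¹ := by
      rw [hRdef]; field_simp
    have he : (1 : ℝ) / (((j + 2 : ℕ) : ℝ) - 1) = t := by
      rw [htdef]; push_cast; ring_nf
    rw [hb, he, Real.inv_rpow hR0.le]
  have hx0 : 0 < x := by rw [hxval]; positivity
  have hx1 : x ≤ 1 := by
    rw [hxval]
    exact inv_le_one_of_one_le₀ hRt1
  have hxRt : x * R ^ t = 1 := by rw [hxval]; field_simp
  -- positivity of thresholds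
  have hd : 0 < dminThreshold n (j + 1) T Ω σ mmin := by
    unfold dminThreshold
    have : (0:ℝ) < (n:ℝ) := by linarith
    positivity
  set d : ℝ := dminThreshold n (j + 1) T Ω σ mmin with hddef
  set B : ℝ := Cmn (j + 1) n / ((T : ℝ) * Ω) *
      (Real.pi / (d * (T : ℝ) * Ω)) ^ (2 * n - 2) * (σ / mmin) with hBdef
  -- arithmetic identities
  have hxi : xiSum (j + 1) = xiSum j + 1 / ((j:ℝ) + 1) := by
    unfold xiSum
    rw [Finset.sum_Icc_succ_top (by omega : 1 ≤ j + 1)]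
    push_cast
    ring
  have hD : dminThreshold n (j + 2) T Ω σ mmin = 4 * R ^ t * d := by
    rw [hddef]
    unfold dminThreshold
    rw [show j + 2 - 1 = j + 1 from rfl, show j + 1 - 1 = j from rfl, hxi,
      Real.rpow_add hR0, pow_succ]
    rw [htdef]
    ring
  have hCk : Cmn (j + 2) n = (4 * R ^ t) ^ (2 * n - 1) * Cmn (j + 1) n := by
    unfold Cmn
    rw [show j + 2 - 1 = j + 1 from rfl, show j + 1 - 1 = j from rfl, hxi,
      Real.rpow_add hR0, pow_succ]
    rw [show (4:ℝ) ^ j * 4 * (R ^ xiSum j * R ^ ((1:ℝ)/((j:ℝ)+1))) =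
      (4 * R ^ t) * ((4:ℝ) ^ j * R ^ xiSum j) from by rw [htdef]; ring, mul_pow]
    ring
  have hy0 : (0:ℝ) < 4 * R ^ t := by positivity
  have hBk : Cmn (j + 2) n / ((T : ℝ) * Ω) *
      (Real.pi / (dminThreshold n (j + 2) T Ω σ mmin * (T : ℝ) * Ω)) ^ (2 * n - 2) *
      (σ / mmin) = 4 * R ^ t * B := by
    rw [hBdef, hCk, hD, show 2 * n - 1 = (2 * n - 2) + 1 from by omega, pow_succ]
    rw [show Real.pi / (4 * R ^ t * d * (T:ℝ) * Ω) =
      Real.pi / (d * (T:ℝ) * Ω) / (4 * R ^ t) from by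
        rw [div_div]; congr 1; ring, div_pow]
    field_simp
  -- geometry
  have hproj : ∀ v : EuclideanSpace ℝ (Fin (j+2)), ‖v‖ = 1 →
      (Submodule.orthogonalProjectionOnto (Submodule.span ℝ {v})ᗮ u : EuclideanSpace ℝ (Fin (j+2)))
        = u - (inner ℝ v u : ℝ) • v := by
    intro v hv
    show ((Submodule.span ℝ {v})ᗮ.starProjection u) = _
    rw [Submodule.starProjection_orthogonal_val, Submodule.starProjection_unit_singleton ℝ hv]
  simp only [hproj v₁ hv₁] at h1a h1b
  simp only [hproj v₂ hv₂] at h2a h2b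
  set a : ℝ := (inner ℝ v₁ u : ℝ) with hadef
  set b : ℝ := (inner ℝ v₂ u : ℝ) with hbdef
  set c : ℝ := (inner ℝ v₁ v₂ : ℝ) with hcdef
  set p₁ : ℝ := ‖u - a • v₁‖ with hp1def
  set p₂ : ℝ := ‖u - b • v₂‖ with hp2def
  clear_value a b c p₁ p₂
  clear_value R t x d B
  have hp1 : 0 ≤ p₁ := hp1def ▸ norm_nonneg _
  have hp2 : 0 ≤ p₂ := hp2def ▸ norm_nonneg _
  -- splitting of the norm
  have hnormu : ‖u‖ ^ 2 = a ^ 2 + p₁ ^ 2 := by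
    have horth : (inner ℝ (a • v₁) (u - a • v₁) : ℝ) = 0 := by
      rw [inner_sub_right, real_inner_smul_left, real_inner_smul_left,
        real_inner_smul_right, real_inner_self_eq_norm_sq, hv₁, ← hadef]
      ring
    have hu : u = a • v₁ + (u - a • v₁) := by abel
    calc ‖u‖ ^ 2 = ‖a • v₁ + (u - a • v₁)‖ ^ 2 := by rw [← hu]
      _ = ‖a • v₁‖ ^ 2 + 2 * (inner ℝ (a • v₁) (u - a • v₁) : ℝ) + ‖u - a • v₁‖ ^ 2 :=
          norm_add_sq_real _ _
      _ = a ^ 2 + p₁ ^ 2 := by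
          have hsm : ‖a • v₁‖ ^ 2 = a ^ 2 := by
            rw [norm_smul, hv₁, Real.norm_eq_abs, mul_one, sq_abs]
          rw [horth, hsm, hp1def]
          ring
  -- key angle estimate
  have hzw : (inner ℝ (v₁ - c • v₂) ((a • v₁ - b • v₂ : EuclideanSpace ℝ (Fin (j+2)))) : ℝ) = a * (1 - c ^ 2) := by
    simp only [inner_sub_left, inner_sub_right, real_inner_smul_left, real_inner_smul_right,
      real_inner_self_eq_norm_sq, hv₁, hv₂, one_pow, mul_one]
    rw [show (inner ℝ v₂ v₁ : ℝ) = c from by rw [hcdef]; exact real_inner_comm v₁ v₂, ← hcdef]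
    ring
  have hz : ‖(v₁ - c • v₂ : EuclideanSpace ℝ (Fin (j+2)))‖ = Real.sqrt (1 - c ^ 2) := by
    rw [norm_eq_sqrt_real_inner]
    congr 1
    simp only [inner_sub_left, inner_sub_right, real_inner_smul_left, real_inner_smul_right,
      real_inner_self_eq_norm_sq, hv₁, hv₂, one_pow, mul_one]
    rw [show (inner ℝ v₂ v₁ : ℝ) = c from by rw [hcdef]; exact real_inner_comm v₁ v₂, ← hcdef,
      norm_smul, hv₂, Real.norm_eq_abs, mul_one, sq_abs]
    ring
  have hc2 : 0 ≤ 1 - c ^ 2 := by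
    have h := abs_real_inner_le_norm v₁ v₂
    rw [hv₁, hv₂, ← hcdef] at h
    exact aux_sq_le_one c h
  -- bound on ‖a • v₁ - b • v₂‖
  have hw : ‖(a • v₁ - b • v₂ : EuclideanSpace ℝ (Fin (j+2)))‖ ≤ p₁ + p₂ := by
    have he : (a • v₁ - b • v₂ : EuclideanSpace ℝ (Fin (j+2)))
        = (u - b • v₂) - (u - a • v₁) := by abel
    rw [he]
    calc ‖(u - b • v₂) - (u - a • v₁)‖ ≤ ‖u - b • v₂‖ + ‖u - a • v₁‖ := norm_sub_le _ _
      _ = p₁ + p₂ := by rw [← hp1def, ← hp2def]; ring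
  have hCS := abs_real_inner_le_norm (v₁ - c • v₂ : EuclideanSpace ℝ (Fin (j+2)))
      (a • v₁ - b • v₂ : EuclideanSpace ℝ (Fin (j+2)))
  rw [hzw, hz] at hCS
  have hkey : |a| * Real.sqrt (1 - c ^ 2) ≤ p₁ + p₂ := by
    have hs := Real.sq_sqrt hc2
    have hsn := Real.sqrt_nonneg (1 - c ^ 2)
    have habs : |a * (1 - c ^ 2)| = |a| * (1 - c ^ 2) := by
      rw [abs_mul, abs_of_nonneg hc2]
    rw [habs] at hCS
    have h2 : |a| * (1 - c ^ 2) ≤ Real.sqrt (1 - c ^ 2) * (p₁ + p₂) :=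
      hCS.trans (mul_le_mul_of_nonneg_left hw hsn)
    exact aux_cancel |a| (Real.sqrt (1 - c ^ 2)) (p₁ + p₂) (add_nonneg hp1 hp2) hsn h2 hs
  -- sine lower bound
  have hsin : x * (Real.sqrt 2 / 2) ≤ Real.sin (Real.pi / 4 * x) := by
    have hm1 : (0:ℝ) ∈ Set.Icc (0:ℝ) Real.pi := Set.mem_Icc.2 ⟨le_rfl, Real.pi_pos.le⟩
    have hm2 : Real.pi/4 ∈ Set.Icc (0:ℝ) Real.pi :=
      Set.mem_Icc.2 ⟨by positivity, by linarith [Real.pi_pos]⟩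
    have h := (strictConcaveOn_sin_Icc.concaveOn).2 hm1 hm2 (sub_nonneg.2 hx1) hx0.le
      (by ring : (1 - x) + x = 1)
    simp only [smul_eq_mul, Real.sin_zero, mul_zero, zero_add] at h
    rw [Real.sin_pi_div_four] at h
    rw [mul_comm x (Real.pi/4)] at h
    exact h
  have hsqrt : x * (Real.sqrt 2 / 2) ≤ Real.sqrt (1 - c ^ 2) := by
    have hpyth := Real.sin_sq_add_cos_sq (Real.pi / 4 * x)
    have hca : c ≤ Real.cos (Real.pi / 4 * x) := hangle
    have hccnn : 0 ≤ Real.cos (Real.pi / 4 * x) + c := by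
      have := hip; linarith
    have hsinsq : Real.sin (Real.pi / 4 * x) ^ 2 ≤ 1 - c ^ 2 :=
      aux_sinsq c (Real.cos (Real.pi / 4 * x)) (Real.sin (Real.pi / 4 * x)) hip hca hpyth
    calc x * (Real.sqrt 2 / 2) ≤ Real.sin (Real.pi / 4 * x) := hsin
      _ ≤ |Real.sin (Real.pi / 4 * x)| := le_abs_self _
      _ = Real.sqrt (Real.sin (Real.pi / 4 * x) ^ 2) := (Real.sqrt_sq_eq_abs _).symm
      _ ≤ Real.sqrt (1 - c ^ 2) := Real.sqrt_le_sqrt hsinsq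
  -- bound on |a|
  have ha_bound : |a| ≤ Real.sqrt 2 * R ^ t * (p₁ + p₂) := by
    have h1 : |a| * (x * (Real.sqrt 2 / 2)) ≤ p₁ + p₂ :=
      le_trans (mul_le_mul_of_nonneg_left hsqrt (abs_nonneg a)) hkey
    have h2s : Real.sqrt 2 * Real.sqrt 2 = 2 := Real.mul_self_sqrt (by norm_num)
    have hpos : (0:ℝ) < Real.sqrt 2 * R ^ t := by positivity
    have hmul := mul_le_mul_of_nonneg_right h1 hpos.le
    calc |a| = |a| * (x * (Real.sqrt 2 / 2)) * (Real.sqrt 2 * R ^ t) := by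
          rw [show |a| * (x * (Real.sqrt 2 / 2)) * (Real.sqrt 2 * R ^ t)
              = |a| * (x * R ^ t) * ((Real.sqrt 2 * Real.sqrt 2) / 2) from by ring,
            hxRt, h2s]
          norm_num
      _ ≤ (p₁ + p₂) * (Real.sqrt 2 * R ^ t) := hmul
      _ = Real.sqrt 2 * R ^ t * (p₁ + p₂) := by ring
  have ha2 : a ^ 2 ≤ 2 * (R ^ t) ^ 2 * (p₁ + p₂) ^ 2 := by
    have h := pow_le_pow_left₀ (abs_nonneg a) ha_bound 2
    rw [sq_abs] at h
    exact aux_ha2 a (R ^ t) (p₁ + p₂) (Real.sqrt 2) h (Real.sq_sqrt (by norm_num))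
  -- claim 1
  have claim1 : ‖u‖ < dminThreshold n (j + 2) T Ω σ mmin / 2 := by
    rw [hD]
    exact aux_claim1 ‖u‖ a p₁ p₂ (R ^ t) d hnormu ha2 h1a h2a hp1 hp2 hd hRt1 (norm_nonneg u)
  -- claim 2
  have claim2 : ‖u‖ ≤ 4 * R ^ t * B :=
    aux_claim2 ‖u‖ a p₁ p₂ (R ^ t) B hnormu ha2 h1b h2b hp1 hp2 hRt1 (norm_nonneg u)
  refine ⟨claim1, ?_⟩
  rw [hBk]
  exact claim2
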